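/- Let 0 < ε ≤ 1/2 and k > 0 with ‖b‖_{L^†} ≤ k. Suppose L̃ is PSD with the same kernel as L and (1−ε)L ⪯ L̃ ⪯ (1+ε)L, suppose ‖b̃ − b‖_{L^†} ≤ ε·k, and suppose x̃ satisfies ‖x̃ − L̃^† b̃‖_{L̃} ≤ ε·‖L̃^† b̃‖_{L̃}. Then ‖x̃ − L^† b‖_L ≤ 10·ε·k. -/

import Mathlib

open Matrix BigOperators

/-- `B` is the Moore–Penrose pseudoinverse of `A`. -/
def IsMoorePenrose {n : Type*} [Fintype n] (A B : Matrix n n ℝ) : Prop :=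
  A * B * A = A ∧ B * A * B = B ∧ (A * B)ᵀ = A * B ∧ (B * A)ᵀ = B * A

/-- The energy (semi-)norm `‖x‖_M = sqrt(xᵀ M x)` associated to a PSD matrix `M`. -/
noncomputable def qnorm {n : Type*} [Fintype n] (M : Matrix n n ℝ) (x : n → ℝ) : ℝ :=
  Real.sqrt (x ⬝ᵥ (M *ᵥ x))

namespace ASCaux
variable {n : Type*} [Fintype n]

lemma dotsym (M : Matrix n n ℝ) (hM : Mᵀ = M) (x y : n → ℝ) :
    x ⬝ᵥ M *ᵥ y = y ⬝ᵥ M *ᵥ x := by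
  rw [dotProduct_mulVec, ← mulVec_transpose, hM, dotProduct_comm]

lemma dotshift (M : Matrix n n ℝ) (hM : Mᵀ = M) (a v : n → ℝ) :
    (M *ᵥ a) ⬝ᵥ v = a ⬝ᵥ M *ᵥ v := by
  rw [dotProduct_comm, dotsym M hM]

lemma quad_add (M : Matrix n n ℝ) (hM : Mᵀ = M) (x y : n → ℝ) :
    (x + y) ⬝ᵥ M *ᵥ (x + y)
      = x ⬝ᵥ M *ᵥ x + 2 * (x ⬝ᵥ M *ᵥ y) + y ⬝ᵥ M *ᵥ y := by
  simp only [mulVec_add, dotProduct_add, add_dotProduct]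
  rw [dotsym M hM y x]
  ring

lemma quad_smul (M : Matrix n n ℝ) (c : ℝ) (x : n → ℝ) :
    (c • x) ⬝ᵥ M *ᵥ (c • x) = c ^ 2 * (x ⬝ᵥ M *ᵥ x) := by
  rw [mulVec_smul, smul_dotProduct, dotProduct_smul, smul_eq_mul, smul_eq_mul]
  ring

lemma cs (M : Matrix n n ℝ) (hM : Mᵀ = M) (hpos : ∀ z, 0 ≤ z ⬝ᵥ M *ᵥ z) (x y : n → ℝ) :
    x ⬝ᵥ M *ᵥ y ≤ Real.sqrt (x ⬝ᵥ M *ᵥ x) * Real.sqrt (y ⬝ᵥ M *ᵥ y) := by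
  have hd : discrim (y ⬝ᵥ M *ᵥ y) (2 * (x ⬝ᵥ M *ᵥ y)) (x ⬝ᵥ M *ᵥ x) ≤ 0 := by
    apply discrim_le_zero
    intro t
    have h0 := hpos (x + t • y)
    rw [quad_add M hM x (t • y), quad_smul] at h0
    have hc : x ⬝ᵥ M *ᵥ (t • y) = t * (x ⬝ᵥ M *ᵥ y) := by
      rw [mulVec_smul, dotProduct_smul, smul_eq_mul]
    rw [hc] at h0
    nlinarith [h0]
  rw [discrim] at hd
  have h1 : (x ⬝ᵥ M *ᵥ y) ^ 2 ≤ (x ⬝ᵥ M *ᵥ x) * (y ⬝ᵥ M *ᵥ y) := by nlinarith [hd]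
  calc x ⬝ᵥ M *ᵥ y ≤ |x ⬝ᵥ M *ᵥ y| := le_abs_self _
    _ = Real.sqrt ((x ⬝ᵥ M *ᵥ y) ^ 2) := (Real.sqrt_sq_eq_abs _).symm
    _ ≤ Real.sqrt ((x ⬝ᵥ M *ᵥ x) * (y ⬝ᵥ M *ᵥ y)) := Real.sqrt_le_sqrt h1
    _ = _ := Real.sqrt_mul (hpos x) _

lemma qnorm_sq (M : Matrix n n ℝ) (x : n → ℝ) (h : 0 ≤ x ⬝ᵥ M *ᵥ x) :
    qnorm M x ^ 2 = x ⬝ᵥ M *ᵥ x := Real.sq_sqrt h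

lemma qnorm_triangle (M : Matrix n n ℝ) (hM : Mᵀ = M) (hpos : ∀ z, 0 ≤ z ⬝ᵥ M *ᵥ z)
    (x y : n → ℝ) : qnorm M (x + y) ≤ qnorm M x + qnorm M y := by
  have h1 : (x + y) ⬝ᵥ M *ᵥ (x + y) ≤ (qnorm M x + qnorm M y) ^ 2 := by
    rw [quad_add M hM]
    have := cs M hM hpos x y
    have e1 := qnorm_sq M x (hpos x)
    have e2 := qnorm_sq M y (hpos y)
    unfold qnorm at *
    nlinarith [Real.sqrt_nonneg (x ⬝ᵥ M *ᵥ x), Real.sqrt_nonneg (y ⬝ᵥ M *ᵥ y)]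
  have h2 : 0 ≤ qnorm M x + qnorm M y :=
    add_nonneg (Real.sqrt_nonneg _) (Real.sqrt_nonneg _)
  calc qnorm M (x + y) = Real.sqrt ((x + y) ⬝ᵥ M *ᵥ (x + y)) := rfl
    _ ≤ Real.sqrt ((qnorm M x + qnorm M y) ^ 2) := Real.sqrt_le_sqrt h1
    _ = |qnorm M x + qnorm M y| := Real.sqrt_sq_eq_abs _
    _ = qnorm M x + qnorm M y := abs_of_nonneg h2

lemma mp_unique {A B C : Matrix n n ℝ} (hB : IsMoorePenrose A B) (hC : IsMoorePenrose A C) :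
    B = C := by
  obtain ⟨hB1, hB2, hB3, hB4⟩ := hB
  obtain ⟨hC1, hC2, hC3, hC4⟩ := hC
  have hAB : A * B = A * C := by
    calc A * B = (A * B)ᵀ := hB3.symm
      _ = ((A * C * A) * B)ᵀ := by rw [hC1]
      _ = (A * B)ᵀ * (A * C)ᵀ := by simp only [transpose_mul, Matrix.mul_assoc]
      _ = (A * B) * (A * C) := by rw [hB3, hC3]
      _ = (A * B * A) * C := by simp only [Matrix.mul_assoc]
      _ = A * C := by rw [hB1]
  have hBA : B * A = C * A := by
    calc B * A = (B * A)ᵀ := hB4.symm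
      _ = (B * (A * C * A))ᵀ := by rw [hC1]
      _ = (C * A)ᵀ * (B * A)ᵀ := by simp only [transpose_mul, Matrix.mul_assoc]
      _ = (C * A) * (B * A) := by rw [hB4, hC4]
      _ = C * (A * B * A) := by simp only [Matrix.mul_assoc]
      _ = C * A := by rw [hB1]
  calc B = B * A * B := hB2.symm
    _ = C * A * B := by rw [hBA]
    _ = C * (A * B) := by simp only [Matrix.mul_assoc]
    _ = C * (A * C) := by rw [hAB]
    _ = C * A * C := by simp only [Matrix.mul_assoc]
    _ = C := hC2

lemma mp_transpose {A B : Matrix n n ℝ} (hA : Aᵀ = A) (h : IsMoorePenrose A B) :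
    IsMoorePenrose A Bᵀ := by
  obtain ⟨h1, h2, h3, h4⟩ := h
  refine ⟨?_, ?_, ?_, ?_⟩
  · calc A * Bᵀ * A = Aᵀ * Bᵀ * Aᵀ := by rw [hA]
      _ = (A * B * A)ᵀ := by simp only [transpose_mul, Matrix.mul_assoc]
      _ = A := by rw [h1, hA]
  · calc Bᵀ * A * Bᵀ = Bᵀ * Aᵀ * Bᵀ := by rw [hA]
      _ = (B * A * B)ᵀ := by simp only [transpose_mul, Matrix.mul_assoc]
      _ = Bᵀ := by rw [h2]
  · calc (A * Bᵀ)ᵀ = B * Aᵀ := by simp only [transpose_mul, transpose_transpose]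
      _ = B * A := by rw [hA]
      _ = (B * A)ᵀ := h4.symm
      _ = Aᵀ * Bᵀ := by simp only [transpose_mul]
      _ = A * Bᵀ := by rw [hA]
  · calc (Bᵀ * A)ᵀ = Aᵀ * B := by simp only [transpose_mul, transpose_transpose]
      _ = A * B := by rw [hA]
      _ = (A * B)ᵀ := h3.symm
      _ = Bᵀ * Aᵀ := by simp only [transpose_mul]
      _ = Bᵀ * A := by rw [hA]

lemma mp_symm {A B : Matrix n n ℝ} (hA : Aᵀ = A) (h : IsMoorePenrose A B) : Bᵀ = B :=
  mp_unique (mp_transpose hA h) h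

lemma range_proj (L Lt Ldag : Matrix n n ℝ) (hLsym : Lᵀ = L) (hLtsym : Ltᵀ = Lt)
    (hdsym : Ldagᵀ = Ldag) (h1 : L * Ldag * L = L)
    (hker : ∀ z, L *ᵥ z = 0 → Lt *ᵥ z = 0) (y : n → ℝ) :
    L *ᵥ (Ldag *ᵥ (Lt *ᵥ y)) = Lt *ᵥ y := by
  have key : ∀ z : n → ℝ, (Lt *ᵥ y - L *ᵥ (Ldag *ᵥ (Lt *ᵥ y))) ⬝ᵥ z = 0 := by
    intro z
    have hz : L *ᵥ (z - Ldag *ᵥ (L *ᵥ z)) = 0 := by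
      rw [mulVec_sub, mulVec_mulVec, mulVec_mulVec, h1, sub_self]
    have htz := hker _ hz
    calc (Lt *ᵥ y - L *ᵥ (Ldag *ᵥ (Lt *ᵥ y))) ⬝ᵥ z
        = (Lt *ᵥ y) ⬝ᵥ z - (L *ᵥ (Ldag *ᵥ (Lt *ᵥ y))) ⬝ᵥ z := sub_dotProduct _ _ _
      _ = y ⬝ᵥ (Lt *ᵥ z) - y ⬝ᵥ (Lt *ᵥ (Ldag *ᵥ (L *ᵥ z))) := by
          rw [dotshift Lt hLtsym, dotshift L hLsym, dotshift Ldag hdsym, dotshift Lt hLtsym]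
      _ = y ⬝ᵥ (Lt *ᵥ (z - Ldag *ᵥ (L *ᵥ z))) := by rw [mulVec_sub, dotProduct_sub]
      _ = 0 := by rw [htz, dotProduct_zero]
  have he : Lt *ᵥ y - L *ᵥ (Ldag *ᵥ (Lt *ᵥ y)) = 0 :=
    dotProduct_self_eq_zero.mp (key _)
  exact (sub_eq_zero.mp he).symm

lemma var_lower (L Ldag : Matrix n n ℝ) (hLsym : Lᵀ = L)
    (hpos : ∀ z, 0 ≤ z ⬝ᵥ L *ᵥ z)
    (x : n → ℝ) (hx : L *ᵥ (Ldag *ᵥ x) = x) (y : n → ℝ) :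
    2 * (x ⬝ᵥ y) - y ⬝ᵥ L *ᵥ y ≤ x ⬝ᵥ Ldag *ᵥ x := by
  have h0 := hpos (y + (-1 : ℝ) • (Ldag *ᵥ x))
  rw [quad_add L hLsym, quad_smul] at h0
  have e1 : y ⬝ᵥ L *ᵥ ((-1 : ℝ) • (Ldag *ᵥ x)) = -(y ⬝ᵥ x) := by
    rw [mulVec_smul, dotProduct_smul, hx]; simp
  rw [e1] at h0
  have e2 : (Ldag *ᵥ x) ⬝ᵥ L *ᵥ (Ldag *ᵥ x) = x ⬝ᵥ Ldag *ᵥ x := by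
    rw [hx]; exact dotProduct_comm _ _
  rw [e2] at h0
  have e3 := dotProduct_comm x y
  nlinarith [h0]

lemma polar (L M : Matrix n n ℝ) (hLsym : Lᵀ = L) (hMsym : Mᵀ = M) (ε : ℝ) (hε : 0 < ε)
    (hbound : ∀ z : n → ℝ, |z ⬝ᵥ M *ᵥ z| ≤ ε * (z ⬝ᵥ L *ᵥ z)) (a b : n → ℝ) :
    2 * (a ⬝ᵥ M *ᵥ b) ≤ ε ^ 2 * (a ⬝ᵥ L *ᵥ a) + b ⬝ᵥ L *ᵥ b := by
  set c := ε⁻¹ with hcdef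
  have hc : ε * c = 1 := mul_inv_cancel₀ (ne_of_gt hε)
  have h1 := (abs_le.mp (hbound (a + c • b))).2
  have h2 := (abs_le.mp (hbound (a + (-c) • b))).1
  rw [quad_add M hMsym a (c • b), quad_add L hLsym a (c • b), quad_smul M c b,
    quad_smul L c b] at h1
  rw [quad_add M hMsym a ((-c) • b), quad_add L hLsym a ((-c) • b), quad_smul M (-c) b,
    quad_smul L (-c) b] at h2
  have eM : a ⬝ᵥ M *ᵥ (c • b) = c * (a ⬝ᵥ M *ᵥ b) := by
    rw [mulVec_smul, dotProduct_smul, smul_eq_mul]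
  have eL : a ⬝ᵥ L *ᵥ (c • b) = c * (a ⬝ᵥ L *ᵥ b) := by
    rw [mulVec_smul, dotProduct_smul, smul_eq_mul]
  have eM' : a ⬝ᵥ M *ᵥ ((-c) • b) = -c * (a ⬝ᵥ M *ᵥ b) := by
    rw [mulVec_smul, dotProduct_smul, smul_eq_mul]
  have eL' : a ⬝ᵥ L *ᵥ ((-c) • b) = -c * (a ⬝ᵥ L *ᵥ b) := by
    rw [mulVec_smul, dotProduct_smul, smul_eq_mul]
  rw [eM, eL] at h1
  rw [eM', eL'] at h2
  have h3 : 4 * c * (a ⬝ᵥ M *ᵥ b) ≤ 2 * ε * (a ⬝ᵥ L *ᵥ a) + 2 * ε * c ^ 2 * (b ⬝ᵥ L *ᵥ b) := by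
    nlinarith [h1, h2]
  have h4 := mul_le_mul_of_nonneg_left h3 (le_of_lt hε)
  have hne : ε ≠ 0 := ne_of_gt hε
  have e5 : ε * (4 * c * (a ⬝ᵥ M *ᵥ b)) = 4 * (a ⬝ᵥ M *ᵥ b) := by
    rw [hcdef]; field_simp
  have e6 : ε * (2 * ε * (a ⬝ᵥ L *ᵥ a) + 2 * ε * c ^ 2 * (b ⬝ᵥ L *ᵥ b))
      = 2 * ε ^ 2 * (a ⬝ᵥ L *ᵥ a) + 2 * (b ⬝ᵥ L *ᵥ b) := by
    rw [hcdef]; field_simp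
  rw [e5, e6] at h4
  linarith [h4]

lemma qnorm_le_of_sq (M : Matrix n n ℝ) (x : n → ℝ) (c : ℝ) (hc : 0 ≤ c)
    (h : x ⬝ᵥ M *ᵥ x ≤ c ^ 2) : qnorm M x ≤ c := by
  calc qnorm M x ≤ Real.sqrt (c ^ 2) := Real.sqrt_le_sqrt h
    _ = c := Real.sqrt_sq hc

end ASCaux

set_option maxHeartbeats 1600000 in
open ASCaux in
/-- approximate solver composition — if `L̃ ≈_ε L`, `b̃ ≈ b`, and `x̃`
approximately solves `L̃ x = b̃`, then `x̃` approximately solves `L x = b`: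
`‖x̃ − L†b‖_L ≤ 10·ε·k`. -/
theorem approximate_solver_composition
    {n : Type*} [Fintype n] [DecidableEq n]
    (L Lt : Matrix n n ℝ) (hL : L.PosSemidef) (hLt : Lt.PosSemidef)
    (hker : ∀ x : n → ℝ, L *ᵥ x = 0 ↔ Lt *ᵥ x = 0)
    (ε k : ℝ) (hε0 : 0 < ε) (hε : ε ≤ 1 / 2) (hk : 0 < k)
    (happrox : ∀ x : n → ℝ,
      (1 - ε) * (x ⬝ᵥ (L *ᵥ x)) ≤ x ⬝ᵥ (Lt *ᵥ x) ∧
      x ⬝ᵥ (Lt *ᵥ x) ≤ (1 + ε) * (x ⬝ᵥ (L *ᵥ x)))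
    (Ldag Ltdag : Matrix n n ℝ)
    (hLdag : IsMoorePenrose L Ldag) (hLtdag : IsMoorePenrose Lt Ltdag)
    (b bt : n → ℝ) (hb : ∃ y, L *ᵥ y = b) (hbt : ∃ y, L *ᵥ y = bt)
    (hbk : qnorm Ldag b ≤ k)
    (hclose : qnorm Ldag (bt - b) ≤ ε * k)
    (xt : n → ℝ)
    (hsolve : qnorm Lt (xt - Ltdag *ᵥ bt) ≤ ε * qnorm Lt (Ltdag *ᵥ bt)) :
    qnorm L (xt - Ldag *ᵥ b) ≤ 10 * ε * k := by
  obtain ⟨yb, hyb⟩ := hb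
  obtain ⟨ybt, hybt⟩ := hbt
  have hLsym : Lᵀ = L := by
    ext i j; simpa using congrFun (congrFun hL.1 i) j
  have hLtsym : Ltᵀ = Lt := by
    ext i j; simpa using congrFun (congrFun hLt.1 i) j
  have hpos : ∀ z : n → ℝ, 0 ≤ z ⬝ᵥ L *ᵥ z := fun z => by simpa using hL.dotProduct_mulVec_nonneg z
  have hpost : ∀ z : n → ℝ, 0 ≤ z ⬝ᵥ Lt *ᵥ z := fun z => by simpa using hLt.dotProduct_mulVec_nonneg z
  have hdsym : Ldagᵀ = Ldag := mp_symm hLsym hLdag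
  have htdsym : Ltdagᵀ = Ltdag := mp_symm hLtsym hLtdag
  obtain ⟨hd1, hd2, hd3, hd4⟩ := hLdag
  obtain ⟨ht1, ht2, ht3, ht4⟩ := hLtdag
  have hcommL : L * Ldag = Ldag * L := by
    calc L * Ldag = (L * Ldag)ᵀ := hd3.symm
      _ = Ldagᵀ * Lᵀ := transpose_mul _ _
      _ = Ldag * L := by rw [hLsym, hdsym]
  have hcommLt : Lt * Ltdag = Ltdag * Lt := by
    calc Lt * Ltdag = (Lt * Ltdag)ᵀ := ht3.symm
      _ = Ltdagᵀ * Ltᵀ := transpose_mul _ _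
      _ = Ltdag * Lt := by rw [hLtsym, htdsym]
  have qdag : ∀ d : n → ℝ, d ⬝ᵥ Ldag *ᵥ d = (Ldag *ᵥ d) ⬝ᵥ L *ᵥ (Ldag *ᵥ d) := by
    intro d
    calc d ⬝ᵥ Ldag *ᵥ d = d ⬝ᵥ Ldag *ᵥ (L *ᵥ (Ldag *ᵥ d)) := by
          rw [mulVec_mulVec, mulVec_mulVec, hd2]
      _ = (Ldag *ᵥ d) ⬝ᵥ L *ᵥ (Ldag *ᵥ d) := (dotshift Ldag hdsym d _).symm
  have qtdag : ∀ d : n → ℝ, d ⬝ᵥ Ltdag *ᵥ d = (Ltdag *ᵥ d) ⬝ᵥ Lt *ᵥ (Ltdag *ᵥ d) := by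
    intro d
    calc d ⬝ᵥ Ltdag *ᵥ d = d ⬝ᵥ Ltdag *ᵥ (Lt *ᵥ (Ltdag *ᵥ d)) := by
          rw [mulVec_mulVec, mulVec_mulVec, ht2]
      _ = (Ltdag *ᵥ d) ⬝ᵥ Lt *ᵥ (Ltdag *ᵥ d) := (dotshift Ltdag htdsym d _).symm
  have hdagpos : ∀ d : n → ℝ, 0 ≤ d ⬝ᵥ Ldag *ᵥ d := fun d => by
    rw [qdag d]; exact hpos _
  have hP : ∀ z, L *ᵥ (Ldag *ᵥ (L *ᵥ z)) = L *ᵥ z := fun z => by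
    rw [mulVec_mulVec, mulVec_mulVec, hd1]
  have hPt : ∀ y, L *ᵥ (Ldag *ᵥ (Lt *ᵥ y)) = Lt *ᵥ y :=
    range_proj L Lt Ldag hLsym hLtsym hdsym hd1 (fun z hz => (hker z).mp hz)
  have hPt' : ∀ y, Lt *ᵥ (Ltdag *ᵥ (L *ᵥ y)) = L *ᵥ y :=
    range_proj Lt L Ltdag hLtsym hLsym htdsym ht1 (fun z hz => (hker z).mpr hz)
  have hPb : L *ᵥ (Ldag *ᵥ b) = b := by rw [← hyb]; exact hP yb
  have hPbt : L *ᵥ (Ldag *ᵥ bt) = bt := by rw [← hybt]; exact hP ybt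
  have hPtbt : Lt *ᵥ (Ltdag *ᵥ bt) = bt := by rw [← hybt]; exact hPt' ybt
  set u := Ltdag *ᵥ bt with hu
  have hu2 : u = Lt *ᵥ ((Ltdag * Ltdag) *ᵥ bt) := by
    rw [mulVec_mulVec, ← Matrix.mul_assoc, hcommLt, ht2]
  have huP : L *ᵥ (Ldag *ᵥ u) = u := by rw [hu2]; exact hPt _
  set s := bt ⬝ᵥ Ltdag *ᵥ bt with hs
  set t := bt ⬝ᵥ Ldag *ᵥ bt with ht
  have hs_eq : u ⬝ᵥ Lt *ᵥ u = s := by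
    rw [hu, hs]; exact (qtdag bt).symm
  have hsnn : 0 ≤ s := hs_eq ▸ hpost u
  have htnn : 0 ≤ t := by rw [ht]; exact hdagpos bt
  clear_value u s t
  have h1me : (0:ℝ) ≤ 1 - ε := by linarith
  have hA1 : (1 - ε) * (u ⬝ᵥ L *ᵥ u) ≤ s := by
    have h := (happrox u).1
    linarith [hs_eq, h]
  have hQLu2 : u ⬝ᵥ L *ᵥ u ≤ 2 * s := by
    nlinarith [hA1, hpos u, mul_nonneg (by linarith : (0:ℝ) ≤ 1/2 - ε) (hpos u)]
  have hst : (1 - ε) * s ≤ t := by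
    have hv := var_lower L Ldag hLsym hpos bt hPbt ((1 - ε) • u)
    rw [quad_smul] at hv
    have e1 : bt ⬝ᵥ ((1 - ε) • u) = (1 - ε) * (bt ⬝ᵥ u) := by
      rw [dotProduct_smul, smul_eq_mul]
    rw [e1] at hv
    have e2 : bt ⬝ᵥ u = s := by rw [hu, hs]
    rw [e2] at hv
    have hA1' := mul_le_mul_of_nonneg_left hA1 h1me
    nlinarith [hv, hA1']
  have hs2t : s ≤ 2 * t := by
    nlinarith [hst, hsnn, mul_nonneg (by linarith : (0:ℝ) ≤ 1/2 - ε) hsnn]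
  have hbbt : b + (bt - b) = bt := by abel
  have htri := qnorm_triangle Ldag hdsym hdagpos b (bt - b)
  rw [hbbt] at htri
  have hτ : Real.sqrt t ≤ (1 + ε) * k := by
    have : qnorm Ldag bt ≤ k + ε * k := by linarith [htri, hbk, hclose]
    calc Real.sqrt t = qnorm Ldag bt := by rw [ht]; rfl
      _ ≤ k + ε * k := this
      _ = (1 + ε) * k := by ring
  have ht_le : t ≤ ((1 + ε) * k) ^ 2 := by
    calc t = Real.sqrt t ^ 2 := (Real.sq_sqrt htnn).symm
      _ ≤ ((1 + ε) * k) ^ 2 := by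
          apply pow_le_pow_left₀ (Real.sqrt_nonneg t) hτ
  -- middle term
  set w := u - Ldag *ᵥ bt with hwdef
  set m := (L - Lt) *ᵥ u with hmdef
  have hw : w = Ldag *ᵥ m := by
    rw [hwdef, hmdef, sub_mulVec, mulVec_sub]
    congr 1
    · rw [mulVec_mulVec, ← hcommL, ← mulVec_mulVec, huP]
    · rw [hPtbt]
  have hMsym : (L - Lt)ᵀ = L - Lt := by rw [transpose_sub, hLsym, hLtsym]
  have hbound : ∀ z : n → ℝ, |z ⬝ᵥ (L - Lt) *ᵥ z| ≤ ε * (z ⬝ᵥ L *ᵥ z) := by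
    intro z
    rw [sub_mulVec, dotProduct_sub, abs_le]
    constructor
    · linarith [(happrox z).2]
    · linarith [(happrox z).1]
  have hpolar := polar L (L - Lt) hLsym hMsym ε hε0 hbound u w
  have hQw : w ⬝ᵥ L *ᵥ w = m ⬝ᵥ Ldag *ᵥ m := by
    rw [hw]; exact (qdag m).symm
  have hQweq : w ⬝ᵥ L *ᵥ w = u ⬝ᵥ (L - Lt) *ᵥ w := by
    have h2 : m ⬝ᵥ Ldag *ᵥ m = m ⬝ᵥ w := by rw [hw]
    rw [hQw, h2, hmdef]
    exact dotshift (L - Lt) hMsym u w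
  have hQwle : w ⬝ᵥ L *ᵥ w ≤ ε ^ 2 * (u ⬝ᵥ L *ᵥ u) := by
    linarith [hpolar, hQweq]
  clear_value w m
  -- term 2 bound
  have hc0 : (0:ℝ) ≤ 2 * ε * ((1 + ε) * k) := by positivity
  have hterm2 : qnorm L w ≤ 2 * ε * ((1 + ε) * k) := by
    apply qnorm_le_of_sq L w _ hc0
    have c1 : w ⬝ᵥ L *ᵥ w ≤ ε ^ 2 * (2 * s) :=
      le_trans hQwle (mul_le_mul_of_nonneg_left hQLu2 (sq_nonneg ε))
    have c2 : ε ^ 2 * (2 * s) ≤ ε ^ 2 * (4 * t) :=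
      mul_le_mul_of_nonneg_left (by linarith) (sq_nonneg ε)
    have c3 : ε ^ 2 * (4 * t) ≤ ε ^ 2 * (4 * ((1 + ε) * k) ^ 2) :=
      mul_le_mul_of_nonneg_left (by linarith) (sq_nonneg ε)
    nlinarith [c1, c2, c3]
  -- term 1 bound
  have hQ1 : (xt - u) ⬝ᵥ Lt *ᵥ (xt - u) ≤ ε ^ 2 * s := by
    have h1' : qnorm Lt (xt - u) ^ 2 ≤ (ε * qnorm Lt u) ^ 2 :=
      pow_le_pow_left₀ (Real.sqrt_nonneg _) hsolve 2
    have e : (ε * qnorm Lt u) ^ 2 = ε ^ 2 * s := by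
      rw [mul_pow, qnorm_sq Lt u (hpost u), hs_eq]
    rw [qnorm_sq Lt (xt - u) (hpost _), e] at h1'
    exact h1'
  have hQ1L : (xt - u) ⬝ᵥ L *ᵥ (xt - u) ≤ 2 * ((xt - u) ⬝ᵥ Lt *ᵥ (xt - u)) := by
    nlinarith [(happrox (xt - u)).1, hpos (xt - u),
      mul_nonneg (by linarith : (0:ℝ) ≤ 1/2 - ε) (hpos (xt - u))]
  have hterm1 : qnorm L (xt - u) ≤ 2 * ε * ((1 + ε) * k) := by
    apply qnorm_le_of_sq L _ _ hc0
    have c2 : ε ^ 2 * s ≤ ε ^ 2 * (2 * t) :=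
      mul_le_mul_of_nonneg_left hs2t (sq_nonneg ε)
    have c3 : ε ^ 2 * (2 * t) ≤ ε ^ 2 * (2 * ((1 + ε) * k) ^ 2) :=
      mul_le_mul_of_nonneg_left (by linarith) (sq_nonneg ε)
    nlinarith [hQ1, hQ1L, c2, c3, sq_nonneg (ε * ((1 + ε) * k)), mul_pos hε0 hk]
  -- term 3 bound
  have hterm3eq : qnorm L (Ldag *ᵥ (bt - b)) = qnorm Ldag (bt - b) :=
    congrArg Real.sqrt (qdag (bt - b)).symm
  have hterm3 : qnorm L (Ldag *ᵥ (bt - b)) ≤ ε * k := by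
    rw [hterm3eq]; exact hclose
  -- assemble
  have hdec : xt - Ldag *ᵥ b = (xt - u) + (w + Ldag *ᵥ (bt - b)) := by
    rw [hwdef, mulVec_sub]; abel
  calc qnorm L (xt - Ldag *ᵥ b)
      = qnorm L ((xt - u) + (w + Ldag *ᵥ (bt - b))) := by rw [hdec]
    _ ≤ qnorm L (xt - u) + qnorm L (w + Ldag *ᵥ (bt - b)) :=
        qnorm_triangle L hLsym hpos _ _
    _ ≤ qnorm L (xt - u) + (qnorm L w + qnorm L (Ldag *ᵥ (bt - b))) := by
        linarith [qnorm_triangle L hLsym hpos w (Ldag *ᵥ (bt - b))]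
    _ ≤ 2 * ε * ((1 + ε) * k) + (2 * ε * ((1 + ε) * k) + ε * k) := by
        linarith [hterm1, hterm2, hterm3]
    _ ≤ 10 * ε * k := by nlinarith [mul_pos hε0 hk, hε, hε0, hk]
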